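/- Validity-preserving weakening (unreachable relational atoms on the left): suppose the sequent Γ, x→a y ⊢ Δ is normal and valid, every labelled formula z:φ ∈ Γ satisfies z ∈ labs(Δ), x ∉ labs(Δ), and x is not reachable in Γ from any label of Δ; then Γ ⊢ Δ is valid. -/

import Mathlib

set_option maxHeartbeats 1000000

/-! ### Syntax of PDL -/

mutual
inductive PDLFormula : Type
  | bot : PDLFormula
  | atom : ℕ → PDLFormula
  | and : PDLFormula → PDLFormula → PDLFormula
  | or : PDLFormula → PDLFormula → PDLFormula
  | imp : PDLFormula → PDLFormula → PDLFormula
  | box : PDLProgram → PDLFormula → PDLFormula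
  deriving DecidableEq

inductive PDLProgram : Type
  | atom : ℕ → PDLProgram
  | comp : PDLProgram → PDLProgram → PDLProgram
  | choice : PDLProgram → PDLProgram → PDLProgram
  | test : PDLFormula → PDLProgram
  | star : PDLProgram → PDLProgram
  deriving DecidableEq
end

/-! ### Semantics of PDL -/

structure PDLModel where
  State : Type
  propI : ℕ → Set State
  progI : ℕ → Set (State × State)

mutual
def PDLFormula.sem (m : PDLModel) : PDLFormula → Set m.State
  | .bot => ∅
  | .atom p => m.propI p
  | .and φ ψ => PDLFormula.sem m φ ∩ PDLFormula.sem m ψ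
  | .or φ ψ => PDLFormula.sem m φ ∪ PDLFormula.sem m ψ
  | .imp φ ψ => (PDLFormula.sem m φ)ᶜ ∪ PDLFormula.sem m ψ
  | .box α φ => { s | ∀ t, (s, t) ∈ PDLProgram.sem m α → t ∈ PDLFormula.sem m φ }

def PDLProgram.sem (m : PDLModel) : PDLProgram → Set (m.State × m.State)
  | .atom a => m.progI a
  | .comp α β => { p | ∃ t, (p.1, t) ∈ PDLProgram.sem m α ∧ (t, p.2) ∈ PDLProgram.sem m β }
  | .choice α β => PDLProgram.sem m α ∪ PDLProgram.sem m β
  | .test φ => { p | p.1 = p.2 ∧ p.1 ∈ PDLFormula.sem m φ }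
  | .star α => { p | Relation.ReflTransGen (fun s t => (s, t) ∈ PDLProgram.sem m α) p.1 p.2 }
end

/-! ### Labelled sequents -/

abbrev Label := ℕ

inductive SeqElem : Type
  | rel : Label → ℕ → Label → SeqElem
  | lab : Label → PDLFormula → SeqElem
  deriving DecidableEq

structure Sequent where
  ant : Finset SeqElem
  suc : Finset SeqElem

def SeqElem.sat (m : PDLModel) (v : Label → m.State) : SeqElem → Prop
  | .rel x a y => (v x, v y) ∈ m.progI a
  | .lab x φ => v x ∈ PDLFormula.sem m φ

def Sequent.valid (S : Sequent) : Prop :=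
  ∀ (m : PDLModel) (v : Label → m.State),
    (∀ A ∈ S.ant, A.sat m v) → ∃ B ∈ S.suc, B.sat m v

def Sequent.falsifiedBy (S : Sequent) (m : PDLModel) (v : Label → m.State) : Prop :=
  (∀ A ∈ S.ant, A.sat m v) ∧ ∀ B ∈ S.suc, ¬ B.sat m v

/-! ### Labels, starred labels, reachability -/

def SeqElem.labels : SeqElem → Finset Label
  | .rel x _ y => {x, y}
  | .lab x _ => {x}

def labs (Γ : Finset SeqElem) : Finset Label := Γ.biUnion SeqElem.labels

def starred (Δ : Finset SeqElem) : Set Label :=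
  { x | ∃ α φ, SeqElem.lab x (PDLFormula.box (PDLProgram.star α) φ) ∈ Δ }

def relStep (Γ : Finset SeqElem) (x y : Label) : Prop := ∃ a, SeqElem.rel x a y ∈ Γ

/-- `x` reaches `y` through a (possibly empty) chain of relational atoms of `Γ`. -/
def reaches (Γ : Finset SeqElem) : Label → Label → Prop := Relation.ReflTransGen (relStep Γ)

/-- A set of relational atoms is acyclic when no label reaches itself via a nonempty chain. -/
def RelAcyclic (Γ : Finset SeqElem) : Prop := ∀ x, ¬ Relation.TransGen (relStep Γ) x x

def Sequent.Acyclic (S : Sequent) : Prop := RelAcyclic S.ant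

/-! ### Classification of formulas, normal sequents -/

def PDLFormula.isAtomic : PDLFormula → Prop
  | .bot => True
  | .atom _ => True
  | _ => False

def PDLFormula.isIterated : PDLFormula → Prop
  | .box (.star _) _ => True
  | _ => False

def SeqElem.isRel : SeqElem → Prop
  | .rel _ _ _ => True
  | _ => False

def NormalSeq (S : Sequent) : Prop :=
  (∀ A ∈ S.ant, A ∉ S.suc) ∧
  (∀ A ∈ S.suc, ∃ x φ, A = SeqElem.lab x φ ∧ (φ.isAtomic ∨ φ.isIterated)) ∧
  (∀ A ∈ S.ant, A.isRel ∨ ∃ x φ, A = SeqElem.lab x φ ∧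
      (φ.isAtomic ∨ ∃ a ψ, φ = PDLFormula.box (PDLProgram.atom a) ψ ∧
        ∀ y, SeqElem.rel x a y ∉ S.ant))

/-! ### Test-freeness and subformulas -/

mutual
def PDLFormula.TestFree : PDLFormula → Prop
  | .bot => True
  | .atom _ => True
  | .and φ ψ => PDLFormula.TestFree φ ∧ PDLFormula.TestFree ψ
  | .or φ ψ => PDLFormula.TestFree φ ∧ PDLFormula.TestFree ψ
  | .imp φ ψ => PDLFormula.TestFree φ ∧ PDLFormula.TestFree ψ
  | .box α φ => PDLProgram.TestFree α ∧ PDLFormula.TestFree φ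

def PDLProgram.TestFree : PDLProgram → Prop
  | .atom _ => True
  | .comp α β => PDLProgram.TestFree α ∧ PDLProgram.TestFree β
  | .choice α β => PDLProgram.TestFree α ∧ PDLProgram.TestFree β
  | .test _ => False
  | .star α => PDLProgram.TestFree α
end

def SeqElem.TestFree : SeqElem → Prop
  | .rel _ _ _ => True
  | .lab _ φ => φ.TestFree

def Sequent.TestFree (S : Sequent) : Prop :=
  (∀ A ∈ S.ant, A.TestFree) ∧ (∀ A ∈ S.suc, A.TestFree)

mutual
inductive Subf : PDLFormula → PDLFormula → Prop
  | refl (φ) : Subf φ φ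
  | andl {χ φ ψ} : Subf χ φ → Subf χ (PDLFormula.and φ ψ)
  | andr {χ φ ψ} : Subf χ ψ → Subf χ (PDLFormula.and φ ψ)
  | orl {χ φ ψ} : Subf χ φ → Subf χ (PDLFormula.or φ ψ)
  | orr {χ φ ψ} : Subf χ ψ → Subf χ (PDLFormula.or φ ψ)
  | impl {χ φ ψ} : Subf χ φ → Subf χ (PDLFormula.imp φ ψ)
  | impr {χ φ ψ} : Subf χ ψ → Subf χ (PDLFormula.imp φ ψ)
  | boxf {χ α φ} : Subf χ φ → Subf χ (PDLFormula.box α φ)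
  | boxp {χ α φ} : SubfP χ α → Subf χ (PDLFormula.box α φ)

inductive SubfP : PDLFormula → PDLProgram → Prop
  | compl {χ α β} : SubfP χ α → SubfP χ (PDLProgram.comp α β)
  | compr {χ α β} : SubfP χ β → SubfP χ (PDLProgram.comp α β)
  | choicel {χ α β} : SubfP χ α → SubfP χ (PDLProgram.choice α β)
  | choicer {χ α β} : SubfP χ β → SubfP χ (PDLProgram.choice α β)
  | test {χ φ} : Subf χ φ → SubfP χ (PDLProgram.test φ)
  | star {χ α} : SubfP χ α → SubfP χ (PDLProgram.star α)
end

/-! ### Label substitution -/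

def substLabel (x y z : Label) : Label := if z = x then y else z

def SeqElem.subst (x y : Label) : SeqElem → SeqElem
  | .rel z a w => .rel (substLabel x y z) a (substLabel x y w)
  | .lab z φ => .lab (substLabel x y z) φ

/-! ### Auxiliary duplicated model -/

def unL {σ : Type} : σ ⊕ σ → σ := Sum.elim id id

/-- Two copies of `m`: copy 1 (`inl`) is an exact copy with no edges leaving it,
copy 2 (`inr`) has `m`'s edges to both copies, plus an extra `a`-edge from
`inr s0` to anything projecting to `t0`. -/
@[reducible] def dup (m : PDLModel) (a : ℕ) (s0 t0 : m.State) : PDLModel where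
  State := m.State ⊕ m.State
  propI p := {P | unL P ∈ m.propI p}
  progI b := {P | (P.1.isLeft → P.2.isLeft = true) ∧
      ((unL P.1, unL P.2) ∈ m.progI b ∨ (b = a ∧ P.1 = Sum.inr s0 ∧ unL P.2 = t0))}

mutual

theorem dup_form (m : PDLModel) (a : ℕ) (s0 t0 : m.State) :
    ∀ (φ : PDLFormula) (s : m.State),
      Sum.inl s ∈ PDLFormula.sem (dup m a s0 t0) φ ↔ s ∈ PDLFormula.sem m φ
  | .bot, s => by simp [PDLFormula.sem]
  | .atom p, s => by simp [PDLFormula.sem, dup, unL]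
  | .and φ ψ, s => by
      simp only [PDLFormula.sem, Set.mem_inter_iff,
        dup_form m a s0 t0 φ s, dup_form m a s0 t0 ψ s]
  | .or φ ψ, s => by
      simp only [PDLFormula.sem, Set.mem_union,
        dup_form m a s0 t0 φ s, dup_form m a s0 t0 ψ s]
  | .imp φ ψ, s => by
      simp only [PDLFormula.sem, Set.mem_union, Set.mem_compl_iff,
        dup_form m a s0 t0 φ s, dup_form m a s0 t0 ψ s]
  | .box α φ, s => by
      simp only [PDLFormula.sem, Set.mem_setOf_eq]
      constructor
      · intro h t hst
        exact (dup_form m a s0 t0 φ t).mp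
          (h (Sum.inl t) ((dup_prog m a s0 t0 α s (Sum.inl t)).mpr ⟨t, rfl, hst⟩))
      · intro h Q hQ
        obtain ⟨t, rfl, hst⟩ := (dup_prog m a s0 t0 α s Q).mp hQ
        exact (dup_form m a s0 t0 φ t).mpr (h t hst)

theorem dup_prog (m : PDLModel) (a : ℕ) (s0 t0 : m.State) :
    ∀ (α : PDLProgram) (s : m.State) (Q : m.State ⊕ m.State),
      (Sum.inl s, Q) ∈ PDLProgram.sem (dup m a s0 t0) α ↔
        ∃ t, Q = Sum.inl t ∧ (s, t) ∈ PDLProgram.sem m α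
  | .atom b, s, Q => by
      cases Q with
      | inl t => simp [PDLProgram.sem, dup, unL]
      | inr t => simp [PDLProgram.sem, dup, unL]
  | .comp α β, s, Q => by
      simp only [PDLProgram.sem, Set.mem_setOf_eq]
      constructor
      · rintro ⟨T, h1, h2⟩
        obtain ⟨t, rfl, h1'⟩ := (dup_prog m a s0 t0 α s T).mp h1
        obtain ⟨u, rfl, h2'⟩ := (dup_prog m a s0 t0 β t Q).mp h2
        exact ⟨u, rfl, t, h1', h2'⟩
      · rintro ⟨u, rfl, t, h1, h2⟩
        exact ⟨Sum.inl t, (dup_prog m a s0 t0 α s (Sum.inl t)).mpr ⟨t, rfl, h1⟩,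
          (dup_prog m a s0 t0 β t (Sum.inl u)).mpr ⟨u, rfl, h2⟩⟩
  | .choice α β, s, Q => by
      simp only [PDLProgram.sem, Set.mem_union, dup_prog m a s0 t0 α s Q,
        dup_prog m a s0 t0 β s Q]
      constructor
      · rintro (⟨t, rfl, h⟩ | ⟨t, rfl, h⟩)
        exacts [⟨t, rfl, Or.inl h⟩, ⟨t, rfl, Or.inr h⟩]
      · rintro ⟨t, rfl, h | h⟩
        exacts [Or.inl ⟨t, rfl, h⟩, Or.inr ⟨t, rfl, h⟩]
  | .test φ, s, Q => by
      simp only [PDLProgram.sem, Set.mem_setOf_eq]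
      constructor
      · rintro ⟨hq, h⟩
        exact ⟨s, hq.symm, rfl, (dup_form m a s0 t0 φ s).mp h⟩
      · rintro ⟨t, rfl, rfl, h⟩
        exact ⟨rfl, (dup_form m a s0 t0 φ s).mpr h⟩
  | .star α, s, Q => by
      simp only [PDLProgram.sem, Set.mem_setOf_eq]
      constructor
      · intro h
        have key : ∀ (P Q' : (dup m a s0 t0).State),
            Relation.ReflTransGen
              (fun u w => (u, w) ∈ PDLProgram.sem (dup m a s0 t0) α) P Q' →
            ∀ s : m.State, P = Sum.inl s →
              ∃ t, Q' = Sum.inl t ∧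
                Relation.ReflTransGen (fun u w => (u, w) ∈ PDLProgram.sem m α) s t := by
          intro P Q' hPQ
          induction hPQ using Relation.ReflTransGen.head_induction_on with
          | refl => exact fun s hs => ⟨s, hs, Relation.ReflTransGen.refl⟩
          | head hstep _ ih =>
            rintro s rfl
            obtain ⟨t, rfl, hst⟩ := (dup_prog m a s0 t0 α s _).mp hstep
            obtain ⟨u, rfl, htu⟩ := ih t rfl
            exact ⟨u, rfl, Relation.ReflTransGen.head hst htu⟩
        exact key _ _ h s rfl
      · rintro ⟨t, rfl, h⟩
        induction h with
        | refl => exact Relation.ReflTransGen.refl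
        | tail _ hstep ih =>
          exact Relation.ReflTransGen.tail ih
            ((dup_prog m a s0 t0 α _ _).mpr ⟨_, rfl, hstep⟩)

end

/-- **Validity-preserving weakening (unreachable relational atoms on the left)**: suppose the
sequent `Γ, x →a y ⊢ Δ` is normal and valid, every labelled formula `z : φ ∈ Γ` satisfies
`z ∈ labs(Δ)`, `x ∉ labs(Δ)`, and `x` is not reachable in `Γ` from any label of `Δ`; then
`Γ ⊢ Δ` is valid. -/
theorem valid_weakening_rel_left (Γ Δ : Finset SeqElem) (x y : Label) (a : ℕ)
    (hnormal : NormalSeq ⟨insert (SeqElem.rel x a y) Γ, Δ⟩)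
    (hvalid : Sequent.valid ⟨insert (SeqElem.rel x a y) Γ, Δ⟩)
    (hΓlabs : ∀ z φ, SeqElem.lab z φ ∈ Γ → z ∈ labs Δ)
    (hx : x ∉ labs Δ)
    (hunreach : ∀ z ∈ labs Δ, ¬ reaches Γ z x) :
    Sequent.valid ⟨Γ, Δ⟩ := by
  classical
  intro m v hsat
  set m' := dup m a (v x) (v y) with hm'
  set v' : Label → m'.State :=
    fun z => if reaches Γ z x then Sum.inr (v z) else Sum.inl (v z) with hv'
  have hvx : v' x = Sum.inr (v x) := if_pos Relation.ReflTransGen.refl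
  have hunL : ∀ z, unL (v' z) = v z := by
    intro z
    by_cases h : reaches Γ z x <;> simp [hv', h, unL]
  have hinl : ∀ z, ¬ reaches Γ z x → v' z = Sum.inl (v z) := by
    intro z h; simp [hv', h]
  have hΔinl : ∀ z ∈ labs Δ, v' z = Sum.inl (v z) := fun z hz => hinl z (hunreach z hz)
  have hant : ∀ A ∈ insert (SeqElem.rel x a y) Γ, A.sat m' v' := by
    intro A hA
    rcases Finset.mem_insert.mp hA with rfl | hA
    · show (v' x, v' y) ∈ m'.progI a
      refine ⟨?_, Or.inr ⟨rfl, hvx, hunL y⟩⟩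
      rw [hvx]; simp
    · cases A with
      | rel z b w =>
        have hvw : (v z, v w) ∈ m.progI b := hsat _ hA
        refine ⟨?_, Or.inl (by rw [hunL, hunL]; exact hvw)⟩
        intro hleft
        by_cases hw : reaches Γ w x
        · have hz : reaches Γ z x := Relation.ReflTransGen.head ⟨b, hA⟩ hw
          simp [hv', hz] at hleft
        · simp [hv', hw]
      | lab z φ =>
        have hz : v' z = Sum.inl (v z) := hΔinl z (hΓlabs z φ hA)
        show v' z ∈ PDLFormula.sem m' φ
        rw [hz]
        exact (dup_form m a (v x) (v y) φ (v z)).mpr (hsat _ hA)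
  obtain ⟨B, hB, hBsat⟩ := hvalid m' v' hant
  refine ⟨B, hB, ?_⟩
  have hBlabs : ∀ z ∈ B.labels, z ∈ labs Δ := by
    intro z hz
    exact Finset.mem_biUnion.mpr ⟨B, hB, hz⟩
  cases B with
  | rel z b w =>
    have hz : v' z = Sum.inl (v z) :=
      hΔinl z (hBlabs z (by simp [SeqElem.labels]))
    have hw : v' w = Sum.inl (v w) :=
      hΔinl w (hBlabs w (by simp [SeqElem.labels]))
    have : (v' z, v' w) ∈ m'.progI b := hBsat
    rw [hz, hw] at this
    rcases this.2 with h | ⟨_, h, _⟩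
    · exact h
    · exact absurd h (by simp)
  | lab z φ =>
    have hz : v' z = Sum.inl (v z) :=
      hΔinl z (hBlabs z (by simp [SeqElem.labels]))
    have : v' z ∈ PDLFormula.sem m' φ := hBsat
    rw [hz] at this
    exact (dup_form m a (v x) (v y) φ (v z)).mp this
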